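/- A history tree for an automaton with n states has at most n nodes: if ⟨T, l⟩ is a history tree with labels in the nonempty subsets of a finite set Q, then |T| ≤ |Q|. -/
import Mathlib


/-- A set of sequences is prefix closed if every prefix of a member is a member. -/
def PrefixClosed (T : Set (List ℕ)) : Prop :=
  ∀ s t : List ℕ, s <+: t → t ∈ T → s ∈ T

/-- A set of sequences is order closed if any sequence that is pointwise below
an initial segment of a member is also a member. -/
def OrderClosed (T : Set (List ℕ)) : Prop :=
  ∀ s t : List ℕ, t ∈ T → s.length ≤ t.length →
    (∀ i : ℕ, i < s.length → s.getD i 0 ≤ t.getD i 0) → s ∈ T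

/-- An ordered tree is a finite, prefix- and order-closed set of sequences of naturals. -/
def OrderedTree (T : Set (List ℕ)) : Prop :=
  T.Finite ∧ PrefixClosed T ∧ OrderClosed T

/-- The degree of a node `τ`: the number of its children in `T`. -/
noncomputable def deg (T : Set (List ℕ)) (τ : List ℕ) : ℕ :=
  {i : ℕ | τ ++ [i] ∈ T}.ncard

/-- A history tree for an automaton with state set `Q`: a finite ordered tree with
nonempty labels such that the union of the children's labels is a proper subset of
the parent's label, and the labels of distinct children of a node are disjoint. -/
def HistoryTree {Q : Type*} (T : Set (List ℕ)) (l : List ℕ → Set Q) : Prop :=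
  OrderedTree T ∧ T.Nonempty ∧
  (∀ τ ∈ T, (l τ).Nonempty) ∧
  (∀ τ ∈ T, (⋃ i ∈ {i : ℕ | τ ++ [i] ∈ T}, l (τ ++ [i])) ⊂ l τ) ∧
  (∀ τ ∈ T, ∀ i j : ℕ, τ ++ [i] ∈ T → τ ++ [j] ∈ T → i ≠ j →
    Disjoint (l (τ ++ [i])) (l (τ ++ [j])))

lemma lcp_aux : ∀ τ σ : List ℕ, τ <+: σ ∨ σ <+: τ ∨
    ∃ ρ i j a b, i ≠ j ∧ τ = ρ ++ i :: a ∧ σ = ρ ++ j :: b := by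
  intro τ
  induction τ with
  | nil => intro σ; exact Or.inl (List.nil_prefix)
  | cons x τ' ih =>
    intro σ
    cases σ with
    | nil => exact Or.inr (Or.inl (List.nil_prefix))
    | cons y σ' =>
      by_cases hxy : x = y
      · subst hxy
        rcases ih σ' with h | h | ⟨ρ, i, j, a, b, hij, hτ, hσ⟩
        · exact Or.inl (List.cons_prefix_cons.mpr ⟨rfl, h⟩)
        · exact Or.inr (Or.inl (List.cons_prefix_cons.mpr ⟨rfl, h⟩))
        · exact Or.inr (Or.inr ⟨x :: ρ, i, j, a, b, hij, by simp [hτ], by simp [hσ]⟩)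
      · exact Or.inr (Or.inr ⟨[], x, y, τ', σ', hxy, rfl, rfl⟩)

theorem stmt11 {Q : Type*} [Finite Q] (T : Set (List ℕ)) (l : List ℕ → Set Q)
    (h : HistoryTree T l) : T.ncard ≤ Nat.card Q := by
  obtain ⟨⟨hfin, hpre, hord⟩, ⟨τ₀, hτ₀⟩, h3, h4, h5⟩ := h
  have hchild : ∀ τ ∈ T, ∀ i, τ ++ [i] ∈ T → l (τ ++ [i]) ⊆ l τ := by
    intro τ hτ i hi
    exact subset_trans (Set.subset_biUnion_of_mem (u := fun i => l (τ ++ [i])) hi)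
      (h4 τ hτ).subset
  have hmono : ∀ (rest τ : List ℕ), τ ∈ T → τ ++ rest ∈ T → l (τ ++ rest) ⊆ l τ := by
    intro rest
    induction rest with
    | nil => intro τ _ _; simp
    | cons i rest ih =>
      intro τ hτ hτr
      have h1 : τ ++ [i] ∈ T := hpre _ _ ⟨rest, by simp⟩ hτr
      have h2 := ih (τ ++ [i]) h1 (by simpa using hτr)
      exact subset_trans (by simpa using h2) (hchild τ hτ i h1)
  have hex : ∀ τ, τ ∈ T → ∃ q, q ∈ l τ ∧
      q ∉ ⋃ i ∈ {i : ℕ | τ ++ [i] ∈ T}, l (τ ++ [i]) := by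
    intro τ hτ
    obtain ⟨q, hq1, hq2⟩ := Set.exists_of_ssubset (h4 τ hτ)
    exact ⟨q, hq1, hq2⟩
  haveI : Nonempty Q := ⟨(h3 τ₀ hτ₀).some⟩
  classical
  set f : List ℕ → Q := fun τ => if hτ : τ ∈ T then (hex τ hτ).choose
    else Classical.arbitrary Q with hf
  have hf1 : ∀ τ (hτ : τ ∈ T), f τ ∈ l τ := by
    intro τ hτ; simp only [hf, dif_pos hτ]; exact (hex τ hτ).choose_spec.1
  have hf2 : ∀ τ (hτ : τ ∈ T),
      f τ ∉ ⋃ i ∈ {i : ℕ | τ ++ [i] ∈ T}, l (τ ++ [i]) := by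
    intro τ hτ; simp only [hf, dif_pos hτ]; exact (hex τ hτ).choose_spec.2
  -- key: if τ is a strict prefix of σ, f σ ≠ f τ
  have key : ∀ τ σ : List ℕ, τ ∈ T → σ ∈ T → τ <+: σ → τ ≠ σ → f σ ≠ f τ := by
    intro τ σ hτ hσ ⟨rest, hrest⟩ hne
    cases rest with
    | nil => simp at hrest; exact absurd hrest hne
    | cons i rest =>
      subst hrest
      have h1 : τ ++ [i] ∈ T := hpre _ _ ⟨rest, by simp⟩ hσ
      have h2 : f (τ ++ i :: rest) ∈ l (τ ++ [i]) := by
        have := hmono rest (τ ++ [i]) h1 (by simpa using hσ)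
        exact this (by simpa using hf1 _ hσ)
      intro heq
      apply hf2 τ hτ
      rw [← heq]
      exact Set.mem_biUnion (show i ∈ {i : ℕ | τ ++ [i] ∈ T} from h1) h2
  have hinj : Set.InjOn f T := by
    intro τ hτ σ hσ heq
    by_contra hne
    rcases lcp_aux τ σ with hp | hp | ⟨ρ, i, j, a, b, hij, hτ', hσ'⟩
    · exact key τ σ hτ hσ hp hne (heq.symm)
    · exact key σ τ hσ hτ hp (Ne.symm hne) heq
    · subst hτ'; subst hσ'
      have hρ : ρ ∈ T := hpre _ _ ⟨i :: a, rfl⟩ hτ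
      have hρi : ρ ++ [i] ∈ T := hpre _ _ ⟨a, by simp⟩ hτ
      have hρj : ρ ++ [j] ∈ T := hpre _ _ ⟨b, by simp⟩ hσ
      have hτi : f (ρ ++ i :: a) ∈ l (ρ ++ [i]) :=
        hmono a (ρ ++ [i]) hρi (by simpa using hτ) (by simpa using hf1 _ hτ)
      have hσj : f (ρ ++ j :: b) ∈ l (ρ ++ [j]) :=
        hmono b (ρ ++ [j]) hρj (by simpa using hσ) (by simpa using hf1 _ hσ)
      exact Set.disjoint_left.mp (h5 ρ hρ i j hρi hρj hij) hτi (heq ▸ hσj)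
  calc T.ncard = (f '' T).ncard := (Set.ncard_image_of_injOn hinj).symm
    _ ≤ (Set.univ : Set Q).ncard :=
        Set.ncard_le_ncard (Set.subset_univ _) Set.finite_univ
    _ = Nat.card Q := Set.ncard_univ Q
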